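/- arXiv:2106.00103 — 3 statements merged into one kernel-verified Lean document; each statement's English description precedes it below -/
import Mathlib

section
/- With J as in the representer theorem, writing h = Σ_j w_j Γ_j, the vector of optimal coefficients w ∈ ℝ^M satisfies (G·G + λG) w = G b, where G is the Gram matrix G_{ij} = ⟨Γ_i, Γ_j⟩_H; in particular, any w solving (G + λI) w = b yields a minimizer of J. -/
open scoped RealInnerProductSpace


section Aux
variable {H : Type*} [NormedAddCommGroup H] [InnerProductSpace ℝ H]
  {M : ℕ} {Γ : Fin M → H} {G : Matrix (Fin M) (Fin M) ℝ}

lemma inner_sum_smul (hG : ∀ i j, G i j = ⟪Γ i, Γ j⟫) (w : Fin M → ℝ) (j : Fin M) :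
    ⟪∑ i, w i • Γ i, Γ j⟫ = ∑ k, G j k * w k := by
  rw [sum_inner]
  refine Finset.sum_congr rfl fun k _ => ?_
  rw [real_inner_smul_left, hG, real_inner_comm]
  ring
end Aux

lemma zero_of_quad (A B : ℝ) (hB : 0 ≤ B) (h : ∀ t : ℝ, 0 ≤ A * t + B * t ^ 2) :
    A = 0 := by
  by_contra hA
  have hB1 : (0:ℝ) < B + 1 := by linarith
  have ht := h (-A / (B + 1))
  have hA2 : 0 < A ^ 2 := by positivity
  have key : A * (-A / (B + 1)) + B * (-A / (B + 1)) ^ 2 = -(A ^ 2 / (B + 1) ^ 2) := by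
    field_simp
    ring
  rw [key] at ht
  have := div_pos hA2 (pow_pos hB1 2)
  linarith

lemma expand_aux {H : Type*} [NormedAddCommGroup H] [InnerProductSpace ℝ H]
    (M : ℕ) (Γ : Fin M → H) (lam : ℝ) (b : Fin M → ℝ) (h v : H) :
    (∑ j, (⟪h + v, Γ j⟫ - b j) ^ 2) + lam * ‖h + v‖ ^ 2
      = ((∑ j, (⟪h, Γ j⟫ - b j) ^ 2) + lam * ‖h‖ ^ 2)
        + 2 * ((∑ j, (⟪h, Γ j⟫ - b j) * ⟪v, Γ j⟫) + lam * ⟪h, v⟫)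
        + ((∑ j, ⟪v, Γ j⟫ ^ 2) + lam * ‖v‖ ^ 2) := by
  have h1 : ∀ j : Fin M, (⟪h + v, Γ j⟫ - b j) ^ 2
      = (⟪h, Γ j⟫ - b j) ^ 2 + 2 * ((⟪h, Γ j⟫ - b j) * ⟪v, Γ j⟫) + ⟪v, Γ j⟫ ^ 2 := by
    intro j; rw [inner_add_left]; ring
  rw [Finset.sum_congr rfl fun j _ => h1 j, norm_add_sq_real,
    Finset.sum_add_distrib, Finset.sum_add_distrib, ← Finset.mul_sum]
  ring


/-- Writing `h = Σⱼ wⱼ Γⱼ`, a minimizing coefficient vector `w` satisfies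
`(G·G + λG) w = G b` for the Gram matrix `G`; in particular, any `w` solving
`(G + λI) w = b` yields a minimizer of `J`. -/
theorem stmt9 (H : Type*) [NormedAddCommGroup H] [InnerProductSpace ℝ H]
    [CompleteSpace H] (M : ℕ) (Γ : Fin M → H) (lam : ℝ) (hlam : 0 < lam)
    (b : Fin M → ℝ) (G : Matrix (Fin M) (Fin M) ℝ)
    (hG : ∀ i j, G i j = ⟪Γ i, Γ j⟫) :
    (∀ w : Fin M → ℝ,
      (∀ h : H, (∑ j, (⟪∑ i, w i • Γ i, Γ j⟫ - b j) ^ 2) + lam * ‖∑ i, w i • Γ i‖ ^ 2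
          ≤ (∑ j, (⟪h, Γ j⟫ - b j) ^ 2) + lam * ‖h‖ ^ 2) →
      (G * G + lam • G).mulVec w = G.mulVec b) ∧
    (∀ w : Fin M → ℝ, (G + lam • (1 : Matrix (Fin M) (Fin M) ℝ)).mulVec w = b →
      ∀ h : H, (∑ j, (⟪∑ i, w i • Γ i, Γ j⟫ - b j) ^ 2) + lam * ‖∑ i, w i • Γ i‖ ^ 2
          ≤ (∑ j, (⟪h, Γ j⟫ - b j) ^ 2) + lam * ‖h‖ ^ 2) := by
  constructor
  · -- first part
    intro w hmin
    set hs : H := ∑ i, w i • Γ i with hs_def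
    have hAzero : ∀ v : H,
        (∑ j, (⟪hs, Γ j⟫ - b j) * ⟪v, Γ j⟫) + lam * ⟪hs, v⟫ = 0 := by
      intro v
      have h2A : 2 * ((∑ j, (⟪hs, Γ j⟫ - b j) * ⟪v, Γ j⟫) + lam * ⟪hs, v⟫) = 0 := by
        apply zero_of_quad _ ((∑ j, ⟪v, Γ j⟫ ^ 2) + lam * ‖v‖ ^ 2)
        · positivity
        · intro t
          have hle := hmin (hs + t • v)
          rw [expand_aux M Γ lam b hs (t • v)] at hle
          have e1 : ∀ j : Fin M, ⟪t • v, Γ j⟫ = t * ⟪v, Γ j⟫ := fun j =>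
            real_inner_smul_left v (Γ j) t
          have e2 : ⟪hs, t • v⟫ = t * ⟪hs, v⟫ := real_inner_smul_right hs v t
          have e3 : ‖t • v‖ ^ 2 = t ^ 2 * ‖v‖ ^ 2 := by
            rw [norm_smul, mul_pow, Real.norm_eq_abs, sq_abs]
          simp only [e1, e2, e3] at hle
          have e4 : ∑ j, (⟪hs, Γ j⟫ - b j) * (t * ⟪v, Γ j⟫)
              = t * ∑ j, (⟪hs, Γ j⟫ - b j) * ⟪v, Γ j⟫ := by
            rw [Finset.mul_sum]; exact Finset.sum_congr rfl fun j _ => by ring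
          have e5 : ∑ j, (t * ⟪v, Γ j⟫) ^ 2 = t ^ 2 * ∑ j, ⟪v, Γ j⟫ ^ 2 := by
            rw [Finset.mul_sum]; exact Finset.sum_congr rfl fun j _ => by ring
          rw [e4, e5] at hle
          nlinarith [hle]
      linarith
    funext i
    have key := hAzero (Γ i)
    simp only [hs_def, inner_sum_smul hG w, ← hG] at key
    -- key : (∑ j, ((∑ k, G j k * w k) - b j) * G i j) + lam * (∑ k, G i k * w k) = 0
    show ((G * G + lam • G).mulVec w) i = (G.mulVec b) i
    simp only [Matrix.mulVec, Matrix.add_apply, Matrix.smul_apply, Matrix.mul_apply,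
      dotProduct, smul_eq_mul]
    have c1 : ∑ j, (∑ k, G i k * G k j + lam * G i j) * w j
        = (∑ j, G i j * (∑ k, G j k * w k)) + lam * ∑ j, G i j * w j := by
      simp only [add_mul, Finset.sum_add_distrib, Finset.sum_mul, Finset.mul_sum]
      rw [Finset.sum_comm]
      congr 1
      · refine Finset.sum_congr rfl fun k _ => Finset.sum_congr rfl fun j _ => by ring
      · refine Finset.sum_congr rfl fun j _ => by ring
    rw [c1]
    have c2 : ∑ j, ((∑ k, G j k * w k) - b j) * G i j
        = (∑ j, G i j * (∑ k, G j k * w k)) - ∑ j, G i j * b j := by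
      rw [← Finset.sum_sub_distrib]
      exact Finset.sum_congr rfl fun j _ => by ring
    rw [c2] at key
    linarith
  · -- second part
    intro w hw h
    set hs : H := ∑ i, w i • Γ i with hs_def
    have hb : ∀ j, (∑ k, G j k * w k) + lam * w j = b j := by
      intro j
      have := congrFun hw j
      simpa [Matrix.mulVec, dotProduct, Matrix.add_apply, Matrix.smul_apply,
        Matrix.one_apply, add_mul, Finset.sum_add_distrib, ite_mul,
        Finset.sum_ite_eq, mul_assoc] using this
    have hexp := expand_aux M Γ lam b hs (h - hs)
    rw [show hs + (h - hs) = h from by abel] at hexp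
    have hA : (∑ j, (⟪hs, Γ j⟫ - b j) * ⟪h - hs, Γ j⟫) + lam * ⟪hs, h - hs⟫ = 0 := by
      have e1 : ∀ j : Fin M, ⟪hs, Γ j⟫ - b j = -(lam * w j) := by
        intro j
        rw [hs_def, inner_sum_smul hG w j]
        have := hb j
        linarith
      have e2 : ∑ j, (⟪hs, Γ j⟫ - b j) * ⟪h - hs, Γ j⟫
          = -(lam * ⟪hs, h - hs⟫) := by
        rw [Finset.sum_congr rfl fun j _ => by rw [e1 j]]
        have : ∑ j, -(lam * w j) * ⟪h - hs, Γ j⟫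
            = -(lam * ∑ j, w j * ⟪Γ j, h - hs⟫) := by
          rw [Finset.mul_sum, ← Finset.sum_neg_distrib]
          exact Finset.sum_congr rfl fun j _ => by
            rw [real_inner_comm (Γ j) (h - hs)]; ring
        rw [this]
        congr 2
        rw [hs_def, sum_inner]
        exact Finset.sum_congr rfl fun j _ => (real_inner_smul_left _ _ _).symm
      linarith [e2]
    have hB : 0 ≤ (∑ j, ⟪h - hs, Γ j⟫ ^ 2) + lam * ‖h - hs‖ ^ 2 := by positivity
    linarith [hexp, hA, hB]
end

section
/- Occupation kernels depend continuously on the signal: if θ_k → θ uniformly on [0,T] with all θ_k, θ continuous, and the kernel K of the RKHS H is continuous, then the order-s occupation kernels Γ_k of θ_k converge weakly in H to the occupation kernel Γ of θ; that is, ⟨h, Γ_k⟩ → ⟨h, Γ⟩ for every h ∈ H. -/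
open scoped RealInnerProductSpace

/-- Continuous dependence of occupation kernels on the signal: uniform convergence
`θₖ → θ` on `[0,T]` implies weak convergence `Γₖ ⇀ Γ` of the order-`s` occupation
kernels. -/
theorem stmt17 (n : ℕ) (H : Type*) [NormedAddCommGroup H] [InnerProductSpace ℝ H]
    (φ : (Fin n → ℝ) → H) (hφ : Continuous φ)
    (s : ℕ) (hs : 1 ≤ s) (T : ℝ) (hT : 0 < T)
    (θk : ℕ → ℝ → (Fin n → ℝ)) (θ : ℝ → (Fin n → ℝ))
    (hθk : ∀ k, Continuous (θk k)) (hθ : Continuous θ)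
    (hunif : TendstoUniformlyOn θk θ Filter.atTop (Set.Icc 0 T))
    (Γk : ℕ → H) (Γ : H)
    (hΓk : ∀ (k : ℕ) (h : H), ⟪h, Γk k⟫ = (1 / (Nat.factorial (s - 1) : ℝ)) *
        ∫ t in (0:ℝ)..T, (T - t) ^ (s - 1) * ⟪h, φ (θk k t)⟫)
    (hΓ : ∀ h : H, ⟪h, Γ⟫ = (1 / (Nat.factorial (s - 1) : ℝ)) *
        ∫ t in (0:ℝ)..T, (T - t) ^ (s - 1) * ⟪h, φ (θ t)⟫) :
    ∀ h : H, Filter.Tendsto (fun k => ⟪h, Γk k⟫) Filter.atTop (nhds ⟪h, Γ⟫) := by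
  intro h
  simp only [hΓk, hΓ h]
  set g : (Fin n → ℝ) → ℝ := fun x => ⟪h, φ x⟫ with hg_def
  have hg : Continuous g := continuous_const.inner hφ
  -- compact set containing all relevant images
  set S : Set (Fin n → ℝ) := Metric.cthickening 1 (θ '' Set.Icc 0 T) with hS_def
  have hScomp : IsCompact S :=
    (isCompact_Icc.image hθ).cthickening
  obtain ⟨C, hC⟩ : ∃ C, ∀ x ∈ S, ‖g x‖ ≤ C := by
    rcases hScomp.exists_bound_of_continuousOn hg.continuousOn with ⟨C, hC⟩
    exact ⟨C, hC⟩
  have hIoc : Set.uIoc (0:ℝ) T ⊆ Set.Icc 0 T := by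
    rw [Set.uIoc_of_le hT.le]
    exact Set.Ioc_subset_Icc_self
  have key : Filter.Tendsto
      (fun k => ∫ t in (0:ℝ)..T, (T - t) ^ (s - 1) * g (θk k t))
      Filter.atTop (nhds (∫ t in (0:ℝ)..T, (T - t) ^ (s - 1) * g (θ t))) := by
    apply intervalIntegral.tendsto_integral_filter_of_dominated_convergence
      (bound := fun _ => |T| ^ (s - 1) * C)
    · filter_upwards with k
      exact ((continuous_const.sub continuous_id).pow _ |>.mul
        (hg.comp (hθk k))).aestronglyMeasurable
    · have := (Metric.tendstoUniformlyOn_iff.mp hunif) 1 one_pos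
      filter_upwards [this] with k hk
      filter_upwards with t ht
      have ht' : t ∈ Set.Icc (0:ℝ) T := hIoc ht
      have hmem : θk k t ∈ S :=
        Metric.mem_cthickening_of_dist_le _ (θ t) 1 _ ⟨t, ht', rfl⟩
          (by rw [dist_comm]; exact (hk t ht').le)
      have h1 : ‖(T - t) ^ (s - 1)‖ ≤ |T| ^ (s - 1) := by
        rw [Real.norm_eq_abs, abs_pow]
        apply pow_le_pow_left₀ (abs_nonneg _)
        calc |T - t| = T - t := abs_of_nonneg (by linarith [ht'.2])
          _ ≤ T := by linarith [ht'.1]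
          _ ≤ |T| := le_abs_self T
      calc ‖(T - t) ^ (s - 1) * g (θk k t)‖ = ‖(T - t) ^ (s - 1)‖ * ‖g (θk k t)‖ :=
            norm_mul _ _
        _ ≤ |T| ^ (s - 1) * C := by
            apply mul_le_mul h1 (hC _ hmem) (norm_nonneg _)
            positivity
    · exact intervalIntegrable_const
    · filter_upwards with t ht
      have ht' : t ∈ Set.Icc (0:ℝ) T := hIoc ht
      exact (Filter.Tendsto.const_mul _)
        ((hg.tendsto _).comp (hunif.tendsto_at ht'))
  exact key.const_mul _
end

section
/- Let γ : [0,T] → ℝ be twice continuously differentiable with γ'' = f ∘ γ + (g ∘ γ)·u for continuous f, g : ℝ → ℝ and continuous u : [0,T] → ℝ, and suppose (f, g) lies in a vector-valued RKHS H of ℝ²-valued functions. Then ⟨(f,g), Γ^{(2)}_{γ,u}⟩_H = γ(T) − γ(0) − T γ'(0), where Γ^{(2)}_{γ,u} represents h ↦ ∫₀ᵀ (T−t)(h₁(γ(t)) + h₂(γ(t)) u(t)) dt. -/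
open scoped RealInnerProductSpace

/-- Second-order control occupation kernel identity: for `γ'' = f∘γ + (g∘γ)·u` with
`(f,g)` in a vector-valued RKHS `H` of `ℝ²`-valued functions (realized by the linear
inclusion `ev`), one has `⟨(f,g), Γ⁽²⁾_{γ,u}⟩ = γ(T) − γ(0) − T γ'(0)`. -/
theorem stmt18 (H : Type*) [NormedAddCommGroup H] [InnerProductSpace ℝ H]
    (ev : H →ₗ[ℝ] (ℝ → ℝ × ℝ))
    (f g : ℝ → ℝ) (hf : Continuous f) (hg : Continuous g)
    (u : ℝ → ℝ) (hu : Continuous u) (T : ℝ) (hT : 0 < T)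
    (γ : ℝ → ℝ) (hγ : ContDiff ℝ 2 γ)
    (hode : ∀ t ∈ Set.Icc (0:ℝ) T, iteratedDeriv 2 γ t = f (γ t) + g (γ t) * u t)
    (F : H) (hF : ∀ x : ℝ, ev F x = (f x, g x))
    (Γ : H)
    (hΓ : ∀ h : H, ⟪h, Γ⟫ =
      ∫ t in (0:ℝ)..T, (T - t) * ((ev h (γ t)).1 + (ev h (γ t)).2 * u t)) :
    ⟪F, Γ⟫ = γ T - γ 0 - T * deriv γ 0 := by
  have hγ2 : ContDiff ℝ ((1:ℕ∞)+1) γ := by norm_num; exact hγ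
  have hγ' : ContDiff ℝ 1 (deriv γ) := (contDiff_succ_iff_deriv.mp hγ2).2.2
  have hdiff : Differentiable ℝ γ := hγ.differentiable (by norm_num)
  have hdiff' : Differentiable ℝ (deriv γ) := hγ'.differentiable one_ne_zero
  have hit2 : iteratedDeriv 2 γ = deriv (deriv γ) := by
    rw [iteratedDeriv_succ, iteratedDeriv_one]
  have hcont2 : Continuous (iteratedDeriv 2 γ) := by
    rw [hit2]; exact hγ'.continuous_deriv le_rfl
  rw [hΓ F]
  have hcongr : ∀ t ∈ Set.uIcc (0:ℝ) T,
      (T - t) * ((ev F (γ t)).1 + (ev F (γ t)).2 * u t) = (T - t) * iteratedDeriv 2 γ t := by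
    intro t ht
    rw [hF, hode t (by rwa [Set.uIcc_of_le hT.le] at ht)]
  rw [intervalIntegral.integral_congr hcongr]
  have hIBP := intervalIntegral.integral_mul_deriv_eq_deriv_mul
    (u := fun x => T - x) (u' := fun _ => (-1 : ℝ)) (v := deriv γ) (v' := iteratedDeriv 2 γ)
    (fun x _ => by simpa using ((hasDerivAt_id x).const_sub T))
    (fun x _ => by rw [hit2]; exact (hdiff' x).hasDerivAt)
    (intervalIntegrable_const)
    (hcont2.intervalIntegrable 0 T)
  rw [hIBP]
  have : ∫ x in (0:ℝ)..T, (-1 : ℝ) * deriv γ x = -(γ T - γ 0) := by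
    rw [intervalIntegral.integral_const_mul,
      intervalIntegral.integral_deriv_eq_sub (fun x _ => hdiff x)
        ((hγ'.continuous).intervalIntegrable 0 T)]
    ring
  rw [this]
  ring
end
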